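/- Infinite-horizon threshold characterization: for the discounted (factor 0 < γ ≤ 1, γ < 1 when needed for convergence) two-network switching problem with stationary rewards f (current) and g (other) and switching cost c ≥ 0, the stationary optimal policy is: switch iff f − g ≤ γΔ − c, where Δ is the expected difference of optimal values at the next state between the two network-connection states; moreover |Δ| ≤ c. -/
import Mathlib


/-- Infinite-horizon threshold characterization.  For the stationary
discounted two-network switching problem (network encoded as a `Bool`, per-step reward
`r x`, switching cost `c ≥ 0`, discount `γ ∈ (0,1)`), with `V` the optimal value
function (a Bellman fixed point), switching from network `x` is optimal iff
`r x - r (!x) ≤ γ·Δ - c` where `Δ = V (!x) - V x`; moreover `|Δ| ≤ c`. -/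
theorem infinite_horizon_threshold (γ c : ℝ) (hγ0 : 0 < γ) (hγ1 : γ < 1) (hc : 0 ≤ c)
    (r V : Bool → ℝ)
    (hV : ∀ x, V x = max (r x + γ * V x) (r (!x) - c + γ * V (!x))) :
    (∀ x, (r x + γ * V x ≤ r (!x) - c + γ * V (!x)) ↔
        r x - r (!x) ≤ γ * (V (!x) - V x) - c) ∧
    (∀ x, |V (!x) - V x| ≤ c) := by
  have key : ∀ x, V (!x) - V x ≤ c := by
    intro x
    have h1 := hV x
    have h2 := hV (!x)
    rw [Bool.not_not] at h2
    have hxa : r (!x) - c + γ * V (!x) ≤ V x := by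
      conv_rhs => rw [h1]
      exact le_max_right _ _
    have hxb : r x + γ * V x ≤ V x := by
      conv_rhs => rw [h1]
      exact le_max_left _ _
    rcases max_choice (r (!x) + γ * V (!x)) (r x - c + γ * V x) with h | h <;>
      rw [h] at h2 <;> linarith
  constructor
  · intro x
    constructor <;> intro h <;> linarith [h]
  · intro x
    have h1 := key x
    have h2 := key (!x)
    rw [Bool.not_not] at h2
    rw [abs_le]
    constructor <;> linarith
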